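/- Let 𝔸 = (A, ≤, →, Σ) be an implicative algebra with |A| < κ for a strongly inaccessible cardinal κ, and let W, ∈_W, =_W and the interpretation ‖·‖ be as defined below. Then W validates the Infinity axiom: ‖∃u (Inf₁(u) ∧ Inf₂(u))‖ ∈ Σ, where Inf₁(u) is ∃x∈u ∀y∈x ⊥ and Inf₂(u) is ∀x∈u ∃y∈u (x ⊆ y ∧ x ∈ y ∧ ∀z∈y (z ∈ x ∨ z = x)); here ∃x∈u φ abbreviates ∃x(x ∈ u ∧ φ), ∀x∈u φ abbreviates ∀x(x ∈ u → φ), and x ⊆ y abbreviates ∀z(z ∈ x → z ∈ y). -/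

import Mathlib

universe u

local notation:65 a:65 " ♯ " b:66 => max a b

/-- An implicative algebra `𝔸 = (A, ≤, →, Σ)`:  a complete lattice `(A, ≤)` together with an
implication `imp` which is antitone in its first argument, monotone in its second argument and
turns infima in the second argument into infima, and a separator `Sig ⊆ A` which is upward
closed, closed under modus ponens and contains the combinators `K` and `S`. -/
structure ImplicativeAlgebra (A : Type u) [CompleteLattice A] where
  imp : A → A → A
  imp_antitone : ∀ ⦃a a' b : A⦄, a ≤ a' → imp a' b ≤ imp a b
  imp_monotone : ∀ ⦃a b b' : A⦄, b ≤ b' → imp a b ≤ imp a b'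
  imp_sInf : ∀ (a : A) (S : Set A), imp a (sInf S) = ⨅ b ∈ S, imp a b
  Sig : Set A
  Sig_upward : ∀ ⦃a b : A⦄, a ∈ Sig → a ≤ b → b ∈ Sig
  Sig_mp : ∀ ⦃a b : A⦄, imp a b ∈ Sig → a ∈ Sig → b ∈ Sig
  Sig_K : (⨅ a : A, ⨅ b : A, imp a (imp b a)) ∈ Sig
  Sig_S : (⨅ a : A, ⨅ b : A, ⨅ c : A,
      imp (imp a (imp b c)) (imp (imp a b) (imp a c))) ∈ Sig

namespace ImplicativeAlgebra

variable {A : Type u} [CompleteLattice A]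

/-- `a × b := ⨅ x, ((a → (b → x)) → x)`. -/
def times (IA : ImplicativeAlgebra A) (a b : A) : A :=
  ⨅ x : A, IA.imp (IA.imp a (IA.imp b x)) x

/-- `a + b := ⨅ x, ((a → x) → ((b → x) → x))`. -/
def plus (IA : ImplicativeAlgebra A) (a b : A) : A :=
  ⨅ x : A, IA.imp (IA.imp a x) (IA.imp (IA.imp b x) x)

/-- `∃⃗_{i} f i := ⨅ x, ((⨅ i, (f i → x)) → x)`.  (`∀⃗` is just `⨅`.) -/
def aex (IA : ImplicativeAlgebra A) {ι : Sort*} (f : ι → A) : A :=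
  ⨅ x : A, IA.imp (⨅ i, IA.imp (f i) x) x

/-- `φ ⊢_{Σ[I]} ψ` iff `⨅ i, (φ i → ψ i) ∈ Σ`. -/
def SigLe (IA : ImplicativeAlgebra A) {ι : Sort*} (f g : ι → A) : Prop :=
  (⨅ i, IA.imp (f i) (g i)) ∈ IA.Sig

/-- `φ ≡_{Σ[I]} ψ` iff `φ ⊢_{Σ[I]} ψ` and `ψ ⊢_{Σ[I]} φ`. -/
def SigEquiv (IA : ImplicativeAlgebra A) {ι : Sort*} (f g : ι → A) : Prop :=
  IA.SigLe f g ∧ IA.SigLe g f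

end ImplicativeAlgebra

/-- Pre-elements of the cumulative hierarchy of partial functions valued in `A`:
an element is an `A`-labelled family of previously constructed elements, i.e. a partial
function (presented by a family indexed by its domain) from earlier elements to `A`. -/
inductive PreW (A : Type u) : Type (u + 1)
  | mk (ι : Type u) (fam : ι → PreW A) (val : ι → A)

namespace PreW

variable {A : Type u}

/-- The (index type of the) domain of a partial function. -/
def dom : PreW A → Type u
  | ⟨ι, _, _⟩ => ι

/-- The family of elements of the domain. -/
def fam : (w : PreW A) → w.dom → PreW A
  | ⟨_, f, _⟩ => f

/-- The values in `A` of the partial function. -/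
def val : (w : PreW A) → w.dom → A
  | ⟨_, _, v⟩ => v

/-- `w` is hereditarily of size `< κ`:  this carves out exactly the elements of the stage
`W_κ` of the hierarchy (for `κ` inaccessible). -/
def HSmall (κ : Cardinal.{u}) : PreW A → Prop
  | ⟨ι, f, _⟩ => Cardinal.mk ι < κ ∧ ∀ i, HSmall κ (f i)

theorem HSmall.fam {κ : Cardinal.{u}} :
    ∀ {w : PreW A}, w.HSmall κ → ∀ i : w.dom, (w.fam i).HSmall κ
  | ⟨_, _, _⟩, h, i => h.2 i

/-- The rank of an element of the hierarchy. -/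
noncomputable def rank : PreW A → Ordinal.{u}
  | ⟨_, f, _⟩ => ⨆ i, Order.succ (rank (f i))

theorem rank_lt_mk {ι : Type u} (f : ι → PreW A) (v : ι → A) (i : ι) :
    (f i).rank < (PreW.mk ι f v).rank := by
  have h : Order.succ (f i).rank ≤ ⨆ j, Order.succ (f j).rank := Ordinal.le_iSup _ i
  have : (f i).rank < ⨆ j, Order.succ (f j).rank :=
    lt_of_lt_of_le (Order.lt_succ _) h
  simpa [rank] using this

end PreW

namespace ImplicativeAlgebra

variable {A : Type u} [CompleteLattice A]

/-- `α =_W β`, defined by recursion on rank: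
`α =_W β := (α ⊆_W β) × (β ⊆_W α)` where
`α ⊆_W β := ∀⃗_{t ∈ dom α} (α t → (fam α t ∈_W β))` and
`γ ∈_W β := ∃⃗_{s ∈ dom β} (β s × (fam β s =_W γ))`. -/
noncomputable def eqW (IA : ImplicativeAlgebra A) : PreW A → PreW A → A
  | ⟨ι₁, f₁, v₁⟩, ⟨ι₂, f₂, v₂⟩ =>
    IA.times
      (⨅ t : ι₁, IA.imp (v₁ t)
        (IA.aex fun s : ι₂ => IA.times (v₂ s) (IA.eqW (f₂ s) (f₁ t))))
      (⨅ t : ι₂, IA.imp (v₂ t)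
        (IA.aex fun s : ι₁ => IA.times (v₁ s) (IA.eqW (f₁ s) (f₂ t))))
termination_by α β => max α.rank β.rank
decreasing_by
  · exact max_lt (lt_max_of_lt_right (PreW.rank_lt_mk f₂ v₂ s))
      (lt_max_of_lt_left (PreW.rank_lt_mk f₁ v₁ t))
  · exact max_lt (lt_max_of_lt_left (PreW.rank_lt_mk f₁ v₁ s))
      (lt_max_of_lt_right (PreW.rank_lt_mk f₂ v₂ t))

/-- `α ∈_W β := ∃⃗_{s ∈ dom β} (β s × (fam β s =_W α))`. -/
noncomputable def memW (IA : ImplicativeAlgebra A) (α β : PreW A) : A :=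
  IA.aex fun s : β.dom => IA.times (β.val s) (IA.eqW (β.fam s) α)

/-- `α ⊆_W β := ∀⃗_{t ∈ dom α} (α t → (fam α t ∈_W β))`. -/
noncomputable def subW (IA : ImplicativeAlgebra A) (α β : PreW A) : A :=
  ⨅ t : α.dom, IA.imp (α.val t) (IA.memW (α.fam t) β)

end ImplicativeAlgebra

/-- The stage `W = W_κ` of the hierarchy: all hereditarily `< κ`-sized elements. -/
def WSet (A : Type u) (κ : Cardinal.{u}) : Type (u + 1) :=
  {w : PreW A // w.HSmall κ}

/-- An element of the domain of `w ∈ W`, as an element of `W`. -/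
def WSet.fam {A : Type u} {κ : Cardinal.{u}} (w : WSet A κ) (i : w.1.dom) : WSet A κ :=
  ⟨w.1.fam i, w.2.fam i⟩

/-- Formulas (in context of length `n`) of the first-order language of set theory, with
(de Bruijn-style) variables `Fin n`, binary predicates `∈` and `=`, connectives `⊥`, `∧`, `∨`,
`→` and quantifiers `∃`, `∀` (binding the last variable of the enlarged context). -/
inductive SetFormula : ℕ → Type
  | bot {n : ℕ} : SetFormula n
  | mem {n : ℕ} (i j : Fin n) : SetFormula n
  | eq {n : ℕ} (i j : Fin n) : SetFormula n
  | and {n : ℕ} (φ ψ : SetFormula n) : SetFormula n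
  | or {n : ℕ} (φ ψ : SetFormula n) : SetFormula n
  | imp {n : ℕ} (φ ψ : SetFormula n) : SetFormula n
  | ex {n : ℕ} (φ : SetFormula (n + 1)) : SetFormula n
  | all {n : ℕ} (φ : SetFormula (n + 1)) : SetFormula n

namespace SetFormula

/-- Renaming of variables (since the only terms of the language of set theory are variables,
substitution is a special case). -/
def rename : {n m : ℕ} → (Fin n → Fin m) → SetFormula n → SetFormula m
  | _, _, _, .bot => .bot
  | _, _, f, .mem i j => .mem (f i) (f j)
  | _, _, f, .eq i j => .eq (f i) (f j)
  | _, _, f, .and φ ψ => .and (φ.rename f) (ψ.rename f)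
  | _, _, f, .or φ ψ => .or (φ.rename f) (ψ.rename f)
  | _, _, f, .imp φ ψ => .imp (φ.rename f) (ψ.rename f)
  | _, _, f, .ex φ => .ex (φ.rename (Fin.snoc (Fin.castSucc ∘ f) (Fin.last _)))
  | _, _, f, .all φ => .all (φ.rename (Fin.snoc (Fin.castSucc ∘ f) (Fin.last _)))

/-- Universal closure `∀x₁ … ∀xₙ φ` of a formula in context of length `n`. -/
def allClose : {n : ℕ} → SetFormula n → SetFormula 0
  | 0, φ => φ
  | _ + 1, φ => allClose (.all φ)

end SetFormula

namespace ImplicativeAlgebra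

variable {A : Type u} [CompleteLattice A]

/-- The interpretation `‖φ[x₁,…,xₙ]‖ : Wⁿ → A` of a formula in context, by recursion on the
structure of `φ`:  atomic formulas are interpreted by `∈_W` and `=_W`, `∧` by `×`, `∨` by `+`,
`→` by `→`, `∃` by `∃⃗` over `W` and `∀` by `∀⃗` (i.e. `⨅`) over `W`. -/
noncomputable def interp (IA : ImplicativeAlgebra A) (κ : Cardinal.{u}) :
    {n : ℕ} → SetFormula n → (Fin n → WSet A κ) → A
  | _, .bot, _ => ⊥
  | _, .mem i j, v => IA.memW (v i).1 (v j).1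
  | _, .eq i j, v => IA.eqW (v i).1 (v j).1
  | _, .and φ ψ, v => IA.times (IA.interp κ φ v) (IA.interp κ ψ v)
  | _, .or φ ψ, v => IA.plus (IA.interp κ φ v) (IA.interp κ ψ v)
  | _, .imp φ ψ, v => IA.imp (IA.interp κ φ v) (IA.interp κ ψ v)
  | _, .ex φ, v => IA.aex fun β : WSet A κ => IA.interp κ φ (Fin.snoc v β)
  | _, .all φ, v => ⨅ β : WSet A κ, IA.interp κ φ (Fin.snoc v β)

end ImplicativeAlgebra

/-! ### Auxiliary development for the proof of the Infinity axiom -/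

namespace ImplicativeAlgebra

variable {A : Type u} [CompleteLattice A] (IA : ImplicativeAlgebra A)

theorem imp_iInf {ι : Sort*} (a : A) (f : ι → A) :
    IA.imp a (⨅ i, f i) = ⨅ i, IA.imp a (f i) := by
  rw [iInf, IA.imp_sInf, iInf_range]

/-- The combinator `K` as element. -/
def Kc : A := ⨅ a : A, ⨅ b : A, IA.imp a (IA.imp b a)

/-- The combinator `S` as element. -/
def Sc : A := ⨅ a : A, ⨅ b : A, ⨅ c : A,
  IA.imp (IA.imp a (IA.imp b c)) (IA.imp (IA.imp a b) (IA.imp a c))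

theorem Kc_Sig : IA.Kc ∈ IA.Sig := IA.Sig_K
theorem Sc_Sig : IA.Sc ∈ IA.Sig := IA.Sig_S

theorem Kc_le {a b : A} : IA.Kc ≤ IA.imp a (IA.imp b a) :=
  (iInf_le _ a).trans (iInf_le _ b)

theorem Sc_le {a b c : A} : IA.Sc ≤
    IA.imp (IA.imp a (IA.imp b c)) (IA.imp (IA.imp a b) (IA.imp a c)) :=
  ((iInf_le _ a).trans (iInf_le _ b)).trans (iInf_le _ c)

/-- Application in the implicative algebra. -/
def app (a b : A) : A := sInf {c | a ≤ IA.imp b c}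

theorem le_imp_app (a b : A) : a ≤ IA.imp b (IA.app a b) := by
  rw [app, IA.imp_sInf]
  exact le_iInf fun c => le_iInf fun hc => hc

theorem app_le {a b c : A} (h : a ≤ IA.imp b c) : IA.app a b ≤ c := sInf_le h

theorem app_le_of {a b x y : A} (h1 : a ≤ IA.imp x y) (h2 : b ≤ x) :
    IA.app a b ≤ y :=
  IA.app_le (h1.trans (IA.imp_antitone h2))

theorem app_mono {a a' b b' : A} (ha : a ≤ a') (hb : b ≤ b') :
    IA.app a b ≤ IA.app a' b' :=
  IA.app_le (ha.trans ((IA.le_imp_app a' b').trans (IA.imp_antitone hb)))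

theorem app_Sig {a b : A} (ha : a ∈ IA.Sig) (hb : b ∈ IA.Sig) :
    IA.app a b ∈ IA.Sig :=
  IA.Sig_mp (IA.Sig_upward ha (IA.le_imp_app a b)) hb

end ImplicativeAlgebra

/-- Untyped λ-terms with constants from `A` (de Bruijn indices, `var 0` innermost). -/
inductive Tm (A : Type u) : Type u
  | var : ℕ → Tm A
  | cst : A → Tm A
  | app : Tm A → Tm A → Tm A
  | lam : Tm A → Tm A

namespace ImplicativeAlgebra

variable {A : Type u} [CompleteLattice A] (IA : ImplicativeAlgebra A)

/-- Evaluation of a λ-term in an environment. -/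
noncomputable def eval : Tm A → List A → A
  | .var i, ρ => ρ.getD i ⊥
  | .cst c, _ => c
  | .app t u, ρ => IA.app (eval t ρ) (eval u ρ)
  | .lam t, ρ => ⨅ a : A, IA.imp a (eval t (a :: ρ))

/-- Well-formedness of a term: variables bounded, constants in `Σ`. -/
def Ok : ℕ → Tm A → Prop
  | n, .var i => i < n
  | _, .cst c => c ∈ IA.Sig
  | n, .app t u => Ok n t ∧ Ok n u
  | n, .lam t => Ok (n + 1) t

/-- Curried implication along an environment of bounds. -/
noncomputable def curry : List A → A → A
  | [], x => x
  | a :: ρ, x => curry ρ (IA.imp a x)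

theorem curry_mono : ∀ (ρ : List A) {x y : A}, x ≤ y → IA.curry ρ x ≤ IA.curry ρ y
  | [], _, _, h => h
  | _ :: ρ, _, _, h => curry_mono ρ (IA.imp_monotone h)

theorem curry_iInf {ι : Sort*} :
    ∀ (ρ : List A) (f : ι → A), IA.curry ρ (⨅ i, f i) = ⨅ i, IA.curry ρ (f i)
  | [], _ => rfl
  | a :: ρ, f => by
      show IA.curry ρ (IA.imp a (⨅ i, f i)) = _
      rw [IA.imp_iInf, curry_iInf ρ]
      rfl

/-- `K`-prefixing: a constant under `n` abstractions. -/
noncomputable def cu : ℕ → A → A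
  | 0, c => c
  | n + 1, c => cu n (IA.app IA.Kc c)

/-- The identity combinator. -/
noncomputable def iC : A := IA.app (IA.app IA.Sc IA.Kc) IA.Kc

theorem iC_le {a : A} : IA.iC ≤ IA.imp a a :=
  IA.app_le_of (IA.app_le_of IA.Sc_le (IA.Kc_le (b := IA.imp a a))) IA.Kc_le

/-- Application under `n` abstractions. -/
noncomputable def cmb : ℕ → A → A → A
  | 0, c, d => IA.app c d
  | n + 1, c, d => cmb n (cmb n (IA.cu n IA.Sc) c) d

/-- Variable lookup combinators. -/
noncomputable def vr : ℕ → ℕ → A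
  | 0, _ => IA.iC
  | n + 1, 0 => IA.cu n IA.iC
  | n + 1, i + 1 => IA.cmb n (IA.cu n IA.Kc) (vr n i)

theorem cu_le : ∀ (ρ : List A) {c x : A}, c ≤ x → IA.cu ρ.length c ≤ IA.curry ρ x
  | [], _, _, h => h
  | a :: ρ, c, x, h => by
      show IA.cu ρ.length (IA.app IA.Kc c) ≤ IA.curry ρ (IA.imp a x)
      exact cu_le ρ (IA.app_le_of IA.Kc_le h)

theorem cmb_le : ∀ (ρ : List A) {c d x y : A},
    c ≤ IA.curry ρ x → d ≤ IA.curry ρ y → IA.cmb ρ.length c d ≤ IA.curry ρ (IA.app x y)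
  | [], _, _, _, _, hc, hd => IA.app_mono hc hd
  | a :: ρ, c, d, x, y, hc, hd => by
      show IA.cmb ρ.length (IA.cmb ρ.length (IA.cu ρ.length IA.Sc) c) d ≤
        IA.curry ρ (IA.imp a (IA.app x y))
      have hS : IA.Sc ≤ IA.imp (IA.imp a x)
          (IA.imp (IA.imp a y) (IA.imp a (IA.app x y))) :=
        IA.Sc_le.trans (IA.imp_antitone (IA.imp_monotone (IA.le_imp_app x y)))
      have h1 := cmb_le ρ (IA.cu_le ρ hS) hc
      have h2 := cmb_le ρ h1 hd
      refine h2.trans (IA.curry_mono ρ ?_)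
      exact IA.app_le_of (IA.app_le_of le_rfl le_rfl) le_rfl

theorem vr_le : ∀ (ρ : List A) (i : ℕ), i < ρ.length →
    IA.vr ρ.length i ≤ IA.curry ρ (ρ.getD i ⊥)
  | a :: ρ, 0, _ => by
      show IA.cu ρ.length IA.iC ≤ IA.curry ρ (IA.imp a a)
      exact IA.cu_le ρ IA.iC_le
  | a :: ρ, i + 1, h => by
      show IA.cmb ρ.length (IA.cu ρ.length IA.Kc) (IA.vr ρ.length i) ≤
        IA.curry ρ (IA.imp a (ρ.getD i ⊥))
      have h1 := IA.cmb_le ρ (IA.cu_le ρ (IA.Kc_le (a := ρ.getD i ⊥) (b := a)))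
        (vr_le ρ i (Nat.lt_of_succ_lt_succ h))
      exact h1.trans (IA.curry_mono ρ (IA.app_le_of le_rfl le_rfl))

/-- Bracket-abstraction compilation of a term. -/
noncomputable def compile : ℕ → Tm A → A
  | n, .var i => IA.vr n i
  | n, .cst c => IA.cu n c
  | n, .app t u => IA.cmb n (compile n t) (compile n u)
  | n, .lam t => compile (n + 1) t

theorem compile_le : ∀ (t : Tm A) (ρ : List A), IA.Ok ρ.length t →
    IA.compile ρ.length t ≤ IA.curry ρ (IA.eval t ρ)
  | .var i, ρ, h => IA.vr_le ρ i h
  | .cst c, ρ, _ => IA.cu_le ρ le_rfl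
  | .app t u, ρ, h => by
      have h1 := compile_le t ρ h.1
      have h2 := compile_le u ρ h.2
      exact IA.cmb_le ρ h1 h2
  | .lam t, ρ, h => by
      show IA.compile (ρ.length + 1) t ≤ IA.curry ρ (⨅ a : A, IA.imp a (IA.eval t (a :: ρ)))
      rw [IA.curry_iInf ρ]
      refine le_iInf fun a => ?_
      exact compile_le t (a :: ρ) h

theorem cu_Sig : ∀ (n : ℕ) {c : A}, c ∈ IA.Sig → IA.cu n c ∈ IA.Sig
  | 0, _, h => h
  | n + 1, _, h => cu_Sig n (IA.app_Sig IA.Kc_Sig h)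

theorem iC_Sig : IA.iC ∈ IA.Sig :=
  IA.app_Sig (IA.app_Sig IA.Sc_Sig IA.Kc_Sig) IA.Kc_Sig

theorem cmb_Sig : ∀ (n : ℕ) {c d : A}, c ∈ IA.Sig → d ∈ IA.Sig → IA.cmb n c d ∈ IA.Sig
  | 0, _, _, hc, hd => IA.app_Sig hc hd
  | n + 1, _, _, hc, hd => cmb_Sig n (cmb_Sig n (IA.cu_Sig n IA.Sc_Sig) hc) hd

theorem vr_Sig : ∀ (n i : ℕ), IA.vr n i ∈ IA.Sig
  | 0, _ => IA.iC_Sig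
  | n + 1, 0 => IA.cu_Sig n IA.iC_Sig
  | n + 1, i + 1 => IA.cmb_Sig n (IA.cu_Sig n IA.Kc_Sig) (vr_Sig n i)

theorem compile_Sig : ∀ (t : Tm A) (n : ℕ), IA.Ok n t → IA.compile n t ∈ IA.Sig
  | .var i, n, _ => IA.vr_Sig n i
  | .cst _, n, h => IA.cu_Sig n h
  | .app t u, n, h => IA.cmb_Sig n (compile_Sig t n h.1) (compile_Sig u n h.2)
  | .lam t, n, h => compile_Sig t (n + 1) h

theorem eval_closed_Sig (t : Tm A) (h : IA.Ok 0 t) : IA.eval t [] ∈ IA.Sig :=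
  IA.Sig_upward (IA.compile_Sig t 0 h) (IA.compile_le t [] h)

/-! #### Helpers for bounding evaluations -/

theorem ev_app {t u : Tm A} {ρ : List A} {x y : A}
    (h1 : IA.eval t ρ ≤ IA.imp x y) (h2 : IA.eval u ρ ≤ x) :
    IA.eval (.app t u) ρ ≤ y :=
  IA.app_le_of h1 h2

theorem ev_lam {t : Tm A} {ρ : List A} {x y : A}
    (h : IA.eval t (x :: ρ) ≤ y) :
    IA.eval (.lam t) ρ ≤ IA.imp x y :=
  (iInf_le _ x).trans (IA.imp_monotone h)

theorem ev_beta {t : Tm A} {ρ : List A} (b : A) :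
    IA.app (IA.eval (.lam t) ρ) b ≤ IA.eval t (b :: ρ) :=
  IA.app_le (iInf_le _ b)

/-! #### Fixed points -/

theorem fixpt {β : Sort*} {r : β → β → Prop} (hwf : WellFounded r) {f : A}
    (hf : f ∈ IA.Sig) {τ : β → A}
    (hstep : ∀ e b, (∀ c, r c b → e ≤ τ c) → IA.app f e ≤ τ b) :
    ∃ θ ∈ IA.Sig, ∀ b, θ ≤ τ b := by
  set wt : Tm A := .lam (.app (.cst f) (.app (.var 0) (.var 0))) with hwt
  set Wf : A := IA.eval wt [] with hWf
  have hWfSig : Wf ∈ IA.Sig := IA.eval_closed_Sig wt ⟨hf, Nat.zero_lt_one, Nat.zero_lt_one⟩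
  refine ⟨IA.app Wf Wf, IA.app_Sig hWfSig hWfSig, fun b => ?_⟩
  induction b using hwf.induction with
  | _ b IH =>
    have h1 : IA.app Wf Wf ≤ IA.app f (IA.app Wf Wf) := IA.ev_beta Wf
    exact h1.trans (hstep _ b IH)

/-! #### Numerals and basic facts -/

theorem eqW_eq : ∀ α β : PreW A, IA.eqW α β = IA.times (IA.subW α β) (IA.subW β α)
  | ⟨ι₁, f₁, v₁⟩, ⟨ι₂, f₂, v₂⟩ => by rw [eqW]; rfl

set_option linter.unusedSectionVars false in
theorem rank_fam_lt : ∀ (w : PreW A) (i : w.dom), (w.fam i).rank < w.rank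
  | ⟨_, f, v⟩, i => PreW.rank_lt_mk f v i

/-- von Neumann numerals in `PreW A`, with informative values. -/
noncomputable def natW : ℕ → PreW A
  | 0 => ⟨ULift (Fin 0), fun i => i.down.elim0, fun i => i.down.elim0⟩
  | n + 1 => ⟨ULift (Fin (n + 1)), fun i => natW i.down.val, fun i =>
      IA.plus (IA.memW (natW i.down.val) (natW n)) (IA.eqW (natW i.down.val) (natW n))⟩
  decreasing_by
  · exact i.down.isLt
  · exact i.down.isLt
  · exact Nat.lt_succ_self n

/-- The value `mem m n + eq m n` occurring in numerals. -/
noncomputable def Dv (n m : ℕ) : A :=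
  IA.plus (IA.memW (IA.natW m) (IA.natW n)) (IA.eqW (IA.natW m) (IA.natW n))

theorem natW_succ (n : ℕ) : (IA.natW (n+1)) =
    ⟨ULift.{u} (Fin (n + 1)), fun i => IA.natW i.down.val, fun i => IA.Dv n i.down.val⟩ := by
  rw [natW]; rfl

theorem memW_natW_succ (n : ℕ) (z : PreW A) :
    IA.memW z (IA.natW (n+1)) = ⨅ x : A, IA.imp (⨅ i : ULift.{u} (Fin (n+1)),
      IA.imp (IA.times (IA.Dv n i.down.val) (IA.eqW (IA.natW i.down.val) z)) x) x := by
  rw [IA.natW_succ]; rfl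

theorem memW_natW_zero (z : PreW A) :
    IA.memW z (IA.natW 0) = ⨅ x : A, IA.imp (⊤ : A) x := by
  rw [natW]
  show IA.aex _ = _
  rw [aex]
  congr 1
  funext x
  haveI : IsEmpty ((PreW.mk (ULift.{u} (Fin 0)) (fun i => i.down.elim0)
      fun i => (i.down.elim0 : A)).dom) := ⟨fun i => i.down.elim0⟩
  rw [iInf_of_empty]

theorem natW_hsmall {κ : Cardinal.{u}} (hκ : Cardinal.aleph0 < κ) :
    ∀ n, (IA.natW n).HSmall κ
  | 0 => by
      rw [natW]
      exact ⟨(Cardinal.lt_aleph0_of_finite _).trans hκ, fun i => i.down.elim0⟩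
  | n + 1 => by
      rw [natW]
      exact ⟨(Cardinal.lt_aleph0_of_finite _).trans hκ,
        fun i => natW_hsmall hκ i.down.val⟩
  termination_by n => n
  decreasing_by exact i.down.isLt

/-- The name of `ω`. -/
noncomputable def omegaW : PreW A := ⟨ULift.{u} ℕ, fun i => IA.natW i.down, fun _ => ⊤⟩

theorem omegaW_hsmall {κ : Cardinal.{u}} (hκ : Cardinal.aleph0 < κ) :
    (IA.omegaW : PreW A).HSmall κ := by
  refine ⟨?_, fun i => IA.natW_hsmall hκ i.down⟩
  have : Cardinal.mk (ULift.{u} ℕ) = Cardinal.aleph0 := by simp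
  rw [this]; exact hκ

theorem memW_omegaW (z : PreW A) :
    IA.memW z IA.omegaW = ⨅ x : A, IA.imp (⨅ i : ULift.{u} ℕ,
      IA.imp (IA.times (⊤ : A) (IA.eqW (IA.natW i.down) z)) x) x := rfl

/-! #### The reflexivity realizer -/

theorem refl_ex : ∃ θ ∈ IA.Sig, ∀ b : PreW A, θ ≤ IA.eqW b b := by
  set q : Tm A := .lam (.lam (.app (.var 0)
    (.lam (.app (.app (.var 0) (.var 2)) (.var 4))))) with hq
  set t : Tm A := .lam (.lam (.app (.app (.var 0) q) q)) with ht
  have hok : IA.Ok 0 t := by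
    show (((0 : ℕ) < 2 ∧ IA.Ok 2 q) ∧ IA.Ok 2 q)
    have : IA.Ok 2 q := by
      show ((0 : ℕ) < 4 ∧ ((0 : ℕ) < 5 ∧ (2 : ℕ) < 5) ∧ (4 : ℕ) < 5)
      omega
    exact ⟨⟨by omega, this⟩, this⟩
  refine IA.fixpt (InvImage.wf PreW.rank (Ordinal.lt_wf)) (IA.eval_closed_Sig t hok) ?_
  intro e b IH
  refine (IA.ev_beta e).trans ?_
  rw [IA.eqW_eq, times]
  refine le_iInf fun x => ?_
  refine IA.ev_lam ?_
  set L : A := IA.subW b b with hL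
  have hqle : ∀ ρ : List A, IA.eval q (IA.imp L (IA.imp L x) :: e :: ρ) ≤ L := by
    intro ρ
    refine le_iInf fun tt => IA.ev_lam ?_
    rw [memW, aex]
    refine le_iInf fun x' => IA.ev_lam ?_
    refine IA.ev_app (iInf_le _ tt) ?_
    rw [times]
    refine le_iInf fun y => IA.ev_lam ?_
    exact IA.ev_app (IA.ev_app le_rfl le_rfl) (IH (b.fam tt) (rank_fam_lt b tt))
  exact IA.ev_app (IA.ev_app le_rfl (hqle [])) (hqle [])

/-! #### Projections and the false combinator -/

/-- `λ x y. y`. -/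
noncomputable def kFc : A := ⨅ x : A, IA.imp x (⨅ y : A, IA.imp y y)

theorem kFc_Sig : IA.kFc ∈ IA.Sig :=
  IA.eval_closed_Sig (.lam (.lam (.var 0))) (show (0:ℕ) < 2 by omega)

theorem kFc_le {x y : A} : IA.kFc ≤ IA.imp x (IA.imp y y) :=
  (iInf_le _ x).trans (IA.imp_monotone (iInf_le _ y))

theorem times_proj1 {p a b : A} (hp : p ≤ IA.times a b) : IA.app p IA.Kc ≤ a :=
  IA.app_le_of (hp.trans (iInf_le _ a)) IA.Kc_le

theorem times_proj2 {p a b : A} (hp : p ≤ IA.times a b) : IA.app p IA.kFc ≤ b :=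
  IA.app_le_of (hp.trans (iInf_le _ b)) IA.kFc_le

theorem sub_elim {α β : PreW A} (t : α.dom) :
    IA.subW α β ≤ IA.imp (α.val t) (IA.memW (α.fam t) β) := iInf_le _ t

theorem mem_elim {γ β : PreW A} (x : A) : IA.memW γ β ≤
    IA.imp (⨅ s : β.dom, IA.imp (IA.times (β.val s) (IA.eqW (β.fam s) γ)) x) x :=
  iInf_le _ x

theorem eq_elim_fst {α β : PreW A} : IA.eqW α β ≤
    IA.imp (IA.imp (IA.subW α β) (IA.imp (IA.subW β α) (IA.subW α β))) (IA.subW α β) :=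
  (IA.eqW_eq α β).le.trans (iInf_le _ _)

theorem eq_elim_snd {α β : PreW A} : IA.eqW α β ≤
    IA.imp (IA.imp (IA.subW α β) (IA.imp (IA.subW β α) (IA.subW β α))) (IA.subW β α) :=
  (IA.eqW_eq α β).le.trans (iInf_le _ _)

theorem nadd3_lt {x y z a b c : Ordinal.{u}} (h1 : x < a) (h2 : y < b) (h3 : z < c) :
    x ♯ y ♯ z < a ♯ b ♯ c := by
  simp only [max_lt_iff]; refine ⟨⟨?_, ?_⟩, ?_⟩ <;> simp [lt_max_iff, *]

theorem nadd3_lt' {x y z a b c : Ordinal.{u}} (h1 : x < c) (h2 : y < b) (h3 : z < a) :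
    x ♯ y ♯ z < a ♯ b ♯ c := by
  simp only [max_lt_iff]; refine ⟨⟨?_, ?_⟩, ?_⟩ <;> simp [lt_max_iff, *]

/-! #### The transitivity realizer -/

theorem trans_ex : ∃ θ ∈ IA.Sig, ∀ a b c : PreW A,
    θ ≤ IA.imp (IA.eqW a b) (IA.imp (IA.eqW b c) (IA.eqW a c)) := by
  classical
  set PR : Tm A := .lam (.app (.app (.var 0) (.var 2))
    (.app (.app (.var 12) (.var 1)) (.var 4))) with hPR
  set D2 : Tm A := .lam (.lam (.app (.var 6) PR)) with hD2
  set C2 : Tm A := .lam (.app (.var 0) D2) with hC2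
  set D1K : Tm A := .lam (.lam (.app (.app (.app (.var 6) (.cst IA.Kc)) (.var 1)) C2)) with hD1K
  set D1F : Tm A := .lam (.lam (.app (.app (.app (.var 7) (.cst IA.kFc)) (.var 1)) C2)) with hD1F
  set C1K : Tm A := .lam (.app (.var 0) D1K) with hC1K
  set C1F : Tm A := .lam (.app (.var 0) D1F) with hC1F
  set P1 : Tm A := .lam (.lam (.app (.app (.app (.var 4) (.cst IA.Kc)) (.var 1)) C1K)) with hP1
  set P2 : Tm A := .lam (.lam (.app (.app (.app (.var 3) (.cst IA.kFc)) (.var 1)) C1F)) with hP2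
  set t : Tm A := .lam (.lam (.lam (.lam (.app (.app (.var 0) P1) P2)))) with ht
  have hok : IA.Ok 0 t := by
    simp [ht, hP1, hP2, hC1K, hC1F, hD1K, hD1F, hC2, hD2, hPR, Ok, IA.Kc_Sig, IA.kFc_Sig]
  have hstep : ∀ (e : A) (p : PreW A × PreW A × PreW A),
      (∀ q : PreW A × PreW A × PreW A,
        InvImage (· < ·) (fun p : PreW A × PreW A × PreW A =>
          PreW.rank p.1 ♯ PreW.rank p.2.1 ♯ PreW.rank p.2.2) q p →
        e ≤ IA.imp (IA.eqW q.1 q.2.1) (IA.imp (IA.eqW q.2.1 q.2.2) (IA.eqW q.1 q.2.2))) →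
      IA.app (IA.eval t []) e ≤
        IA.imp (IA.eqW p.1 p.2.1) (IA.imp (IA.eqW p.2.1 p.2.2) (IA.eqW p.1 p.2.2)) := by
    rintro e ⟨a, b, c⟩ IH
    refine (IA.ev_beta e).trans ?_
    refine IA.ev_lam (IA.ev_lam ?_)
    rw [IA.eqW_eq a c, times]
    refine le_iInf fun x => IA.ev_lam ?_
    refine IA.ev_app (IA.ev_app le_rfl ?hP1) ?hP2
    case hP1 =>
      refine le_iInf fun tt => IA.ev_lam ?_
      rw [memW, aex]
      refine le_iInf fun x' => IA.ev_lam ?_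
      refine IA.ev_app ((IA.ev_app ((IA.ev_app ?_ (IA.Kc_le (a := IA.subW a b) (b := IA.subW b a))).trans
        (IA.sub_elim (β := b) tt)) ?_).trans (IA.mem_elim x')) ?_
      · exact IA.eq_elim_fst (α := a) (β := b)
      · exact le_rfl
      refine le_iInf fun s => IA.ev_lam ?_
      refine IA.ev_app (iInf_le _ x') ?_
      refine IA.ev_lam (IA.ev_lam ?_)
      refine IA.ev_app ((IA.ev_app ((IA.ev_app ?_ (IA.Kc_le (a := IA.subW b c) (b := IA.subW c b))).trans
        (IA.sub_elim (β := c) s)) ?_).trans (IA.mem_elim x')) ?_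
      · exact IA.eq_elim_fst (α := b) (β := c)
      · exact le_rfl
      refine le_iInf fun u => IA.ev_lam ?_
      refine IA.ev_app (iInf_le _ x') ?_
      refine IA.ev_lam (IA.ev_lam ?_)
      refine IA.ev_app (iInf_le _ u) ?_
      rw [times]
      refine le_iInf fun y => IA.ev_lam ?_
      refine IA.ev_app (IA.ev_app le_rfl le_rfl) ?_
      refine IA.ev_app (IA.ev_app ?_ le_rfl) le_rfl
      exact IH (c.fam u, b.fam s, a.fam tt)
        (nadd3_lt' (rank_fam_lt c u) (rank_fam_lt b s) (rank_fam_lt a tt))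
    case hP2 =>
      refine le_iInf fun tt => IA.ev_lam ?_
      rw [memW, aex]
      refine le_iInf fun x' => IA.ev_lam ?_
      refine IA.ev_app ((IA.ev_app ((IA.ev_app ?_ (IA.kFc_le (x := IA.subW b c) (y := IA.subW c b))).trans
        (IA.sub_elim (β := b) tt)) ?_).trans (IA.mem_elim x')) ?_
      · exact IA.eq_elim_snd (α := b) (β := c)
      · exact le_rfl
      refine le_iInf fun s => IA.ev_lam ?_
      refine IA.ev_app (iInf_le _ x') ?_
      refine IA.ev_lam (IA.ev_lam ?_)
      refine IA.ev_app ((IA.ev_app ((IA.ev_app ?_ (IA.kFc_le (x := IA.subW a b) (y := IA.subW b a))).trans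
        (IA.sub_elim (β := a) s)) ?_).trans (IA.mem_elim x')) ?_
      · exact IA.eq_elim_snd (α := a) (β := b)
      · exact le_rfl
      refine le_iInf fun u => IA.ev_lam ?_
      refine IA.ev_app (iInf_le _ x') ?_
      refine IA.ev_lam (IA.ev_lam ?_)
      refine IA.ev_app (iInf_le _ u) ?_
      rw [times]
      refine le_iInf fun y => IA.ev_lam ?_
      refine IA.ev_app (IA.ev_app le_rfl le_rfl) ?_
      refine IA.ev_app (IA.ev_app ?_ le_rfl) le_rfl
      exact IH (a.fam u, b.fam s, c.fam tt)
        (nadd3_lt (rank_fam_lt a u) (rank_fam_lt b s) (rank_fam_lt c tt))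
  obtain ⟨θ, h1, h2⟩ := IA.fixpt (InvImage.wf _ Ordinal.lt_wf)
    (IA.eval_closed_Sig t hok) hstep
  exact ⟨θ, h1, fun a b c => h2 (a, b, c)⟩

theorem times_elim {a b : A} (x : A) :
    IA.times a b ≤ IA.imp (IA.imp a (IA.imp b x)) x := iInf_le _ x

theorem plus_elim {a b : A} (x : A) :
    IA.plus a b ≤ IA.imp (IA.imp a x) (IA.imp (IA.imp b x) x) := iInf_le _ x

/-! #### Symmetry -/

theorem sym_ex : ∃ θ ∈ IA.Sig, ∀ a b : PreW A,
    θ ≤ IA.imp (IA.eqW a b) (IA.eqW b a) := by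
  set t : Tm A := .lam (.lam (.app (.app (.var 0) (.app (.var 1) (.cst IA.kFc)))
    (.app (.var 1) (.cst IA.Kc)))) with ht
  refine ⟨IA.eval t [], IA.eval_closed_Sig t (by simp [ht, Ok, IA.Kc_Sig, IA.kFc_Sig]),
    fun a b => ?_⟩
  refine IA.ev_lam ?_
  rw [IA.eqW_eq b a, times]
  refine le_iInf fun x => IA.ev_lam ?_
  refine IA.ev_app (IA.ev_app le_rfl ?_) ?_
  · refine IA.ev_app ?_ (IA.kFc_le (x := IA.subW a b) (y := IA.subW b a))
    exact IA.eq_elim_snd (α := a) (β := b)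
  · refine IA.ev_app ?_ (IA.Kc_le (a := IA.subW a b) (b := IA.subW b a))
    exact IA.eq_elim_fst (α := a) (β := b)

/-! #### Compatibility of membership with equality -/

theorem cm_ex {T : A} (hT : T ∈ IA.Sig)
    (hTle : ∀ a b c : PreW A, T ≤ IA.imp (IA.eqW a b) (IA.imp (IA.eqW b c) (IA.eqW a c))) :
    ∃ θ ∈ IA.Sig, ∀ a b c : PreW A,
      θ ≤ IA.imp (IA.eqW a b) (IA.imp (IA.memW a c) (IA.memW b c)) := by
  set P : Tm A := .lam (.app (.app (.var 0) (.var 2))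
    (.app (.app (.cst T) (.var 1)) (.var 6))) with hP
  set t : Tm A := .lam (.lam (.lam (.app (.var 1)
    (.lam (.app (.var 0) (.lam (.lam (.app (.var 3) P)))))))) with ht
  refine ⟨IA.eval t [], IA.eval_closed_Sig t (by simp [ht, hP, Ok, hT]), fun a b c => ?_⟩
  refine IA.ev_lam (IA.ev_lam ?_)
  rw [memW, aex]
  refine le_iInf fun x => IA.ev_lam ?_
  refine IA.ev_app (iInf_le _ x) ?_
  refine le_iInf fun s => IA.ev_lam ?_
  refine IA.ev_app (iInf_le _ x) ?_
  refine IA.ev_lam (IA.ev_lam ?_)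
  refine IA.ev_app (iInf_le _ s) ?_
  rw [times]
  refine le_iInf fun y => IA.ev_lam ?_
  refine IA.ev_app (IA.ev_app le_rfl le_rfl) ?_
  refine IA.ev_app (IA.ev_app ?_ le_rfl) le_rfl
  exact hTle (c.fam s) a b

theorem cm2_ex {T : A} (hT : T ∈ IA.Sig)
    (hTle : ∀ a b c : PreW A, T ≤ IA.imp (IA.eqW a b) (IA.imp (IA.eqW b c) (IA.eqW a c))) :
    ∃ θ ∈ IA.Sig, ∀ a c d : PreW A,
      θ ≤ IA.imp (IA.memW a c) (IA.imp (IA.eqW c d) (IA.memW a d)) := by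
  set P2 : Tm A := .lam (.app (.app (.var 0) (.var 2))
    (.app (.app (.cst T) (.var 1)) (.var 4))) with hP2
  set D' : Tm A := .lam (.lam (.app (.var 6) P2)) with hD'
  set C : Tm A := .lam (.app (.var 0) D') with hC
  set D : Tm A := .lam (.lam (.app (.app (.app (.var 4) (.cst IA.Kc)) (.var 1)) C)) with hD
  set t : Tm A := .lam (.lam (.lam (.app (.var 2) (.lam (.app (.var 0) D))))) with ht
  refine ⟨IA.eval t [], IA.eval_closed_Sig t
    (by simp [ht, hD, hC, hD', hP2, Ok, hT, IA.Kc_Sig]), fun a c d => ?_⟩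
  refine IA.ev_lam (IA.ev_lam ?_)
  rw [memW, aex]
  refine le_iInf fun x => IA.ev_lam ?_
  refine IA.ev_app (iInf_le _ x) ?_
  refine le_iInf fun s => IA.ev_lam ?_
  refine IA.ev_app (iInf_le _ x) ?_
  refine IA.ev_lam (IA.ev_lam ?_)
  refine IA.ev_app ((IA.ev_app ((IA.ev_app ?_ (IA.Kc_le (a := IA.subW c d)
    (b := IA.subW d c))).trans (IA.sub_elim (β := d) s)) ?_).trans (IA.mem_elim x)) ?_
  · exact IA.eq_elim_fst (α := c) (β := d)
  · exact le_rfl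
  refine le_iInf fun u => IA.ev_lam ?_
  refine IA.ev_app (iInf_le _ x) ?_
  refine IA.ev_lam (IA.ev_lam ?_)
  refine IA.ev_app (iInf_le _ u) ?_
  rw [times]
  refine le_iInf fun y => IA.ev_lam ?_
  refine IA.ev_app (IA.ev_app le_rfl le_rfl) ?_
  refine IA.ev_app (IA.ev_app ?_ le_rfl) le_rfl
  exact hTle (d.fam u) (c.fam s) a

/-! #### Monotonicity of numeral membership: `s ∈ n → s ∈ n+1` -/

theorem mono_ex {Th SY : A} (hTh : Th ∈ IA.Sig) (hThle : ∀ b : PreW A, Th ≤ IA.eqW b b)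
    (hSY : SY ∈ IA.Sig) (hSYle : ∀ a b : PreW A, SY ≤ IA.imp (IA.eqW a b) (IA.eqW b a)) :
    ∃ M ∈ IA.Sig, ∀ (n : ℕ) (s : PreW A),
      M ≤ IA.imp (IA.memW s (IA.natW n)) (IA.memW s (IA.natW (n + 1))) := by
  set INR : Tm A := .lam (.lam (.app (.var 0) (.cst Th))) with hINR
  set PAIR : Tm A := .lam (.app (.app (.var 0) INR) (.app (.cst SY) (.var 4))) with hPAIR
  set MEMT : Tm A := .lam (.app (.var 0) PAIR) with hMEMT
  set R : Tm A := .lam (.lam (.lam (.app (.var 1) MEMT))) with hR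
  set L : Tm A := .lam (.lam (.lam (.app (.var 1) (.app (.var 9) (.var 2))))) with hL
  set DSTw : Tm A := .app (.app (.var 2) L) R with hDSTw
  set P' : Tm A := .lam (.app (.app (.var 0) DSTw) (.var 1)) with hP'
  set G : Tm A := .lam (.lam (.app (.var 3) P')) with hG
  set t : Tm A := .lam (.lam (.lam (.app (.var 1) (.lam (.app (.var 0) G))))) with ht
  have hok : IA.Ok 0 t := by
    simp [ht, hG, hP', hDSTw, hL, hR, hMEMT, hPAIR, hINR, Ok, hTh, hSY]
  have hstep : ∀ (e : A) (n : ℕ), (∀ n' : ℕ, n' < n → e ≤ ⨅ s : PreW A,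
        IA.imp (IA.memW s (IA.natW n')) (IA.memW s (IA.natW (n' + 1)))) →
      IA.app (IA.eval t []) e ≤ ⨅ s : PreW A,
        IA.imp (IA.memW s (IA.natW n)) (IA.memW s (IA.natW (n + 1))) := by
    intro e n IH
    refine (IA.ev_beta e).trans ?_
    refine le_iInf fun s => IA.ev_lam ?_
    cases n with
    | zero =>
      rw [IA.memW_natW_succ 0 s]
      refine le_iInf fun x => IA.ev_lam ?_
      refine IA.ev_app (x := (⊤ : A)) ?_ ?_
      · exact (IA.memW_natW_zero s).le.trans (iInf_le _ x)
      · exact le_top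
    | succ n' =>
      rw [IA.memW_natW_succ (n' + 1) s]
      refine le_iInf fun x => IA.ev_lam ?_
      refine IA.ev_app (x := ⨅ i : ULift.{u} (Fin (n' + 1)),
        IA.imp (IA.times (IA.Dv n' i.down.val) (IA.eqW (IA.natW i.down.val) s)) x) ?_ ?_
      · exact (IA.memW_natW_succ n' s).le.trans (iInf_le _ x)
      refine le_iInf fun i => IA.ev_lam ?_
      refine IA.ev_app (iInf_le _ x) ?_
      refine IA.ev_lam (IA.ev_lam ?_)
      refine IA.ev_app (iInf_le _
        (ULift.up (⟨i.down.val, by omega⟩ : Fin (n' + 2)))) ?_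
      rw [times]
      refine le_iInf fun y => IA.ev_lam ?_
      refine IA.ev_app (IA.ev_app le_rfl ?_) le_rfl
      -- goal : eval DSTw ρ ≤ Dv (n'+1) i.down.val
      refine IA.ev_app (IA.ev_app (iInf_le _ (IA.Dv (n' + 1) i.down.val)) ?_) ?_
      · -- L branch
        refine IA.ev_lam ?_
        rw [Dv, plus]
        refine le_iInf fun y' => IA.ev_lam (IA.ev_lam ?_)
        refine IA.ev_app le_rfl ?_
        refine IA.ev_app ?_ le_rfl
        exact (IH n' (Nat.lt_succ_self n')).trans (iInf_le _ (IA.natW i.down.val))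
      · -- R branch
        refine IA.ev_lam ?_
        rw [Dv, plus]
        refine le_iInf fun y' => IA.ev_lam (IA.ev_lam ?_)
        refine IA.ev_app le_rfl ?_
        rw [IA.memW_natW_succ n' (IA.natW i.down.val)]
        refine le_iInf fun x'' => IA.ev_lam ?_
        refine IA.ev_app (iInf_le _ (ULift.up (Fin.last n'))) ?_
        rw [times]
        refine le_iInf fun y'' => IA.ev_lam ?_
        refine IA.ev_app (IA.ev_app le_rfl ?_) ?_
        · -- inr Th ≤ Dv n' n'
          rw [Dv, plus]
          refine le_iInf fun y3 => IA.ev_lam (IA.ev_lam ?_)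
          refine IA.ev_app le_rfl ?_
          exact hThle (IA.natW n')
        · -- SY w₂ ≤ eqW (natW n') (natW m)
          refine IA.ev_app ?_ le_rfl
          exact hSYle (IA.natW i.down.val) (IA.natW n')
  obtain ⟨M, h1, h2⟩ := IA.fixpt (Nat.lt_wfRel.wf) (IA.eval_closed_Sig t hok) hstep
  exact ⟨M, h1, fun n s => (h2 n).trans (iInf_le _ s)⟩

/-! #### The three components of the successor property -/

theorem s1_ex {M T Th SY : A} (hM : M ∈ IA.Sig)
    (hMle : ∀ (n : ℕ) (s : PreW A), M ≤ IA.imp (IA.memW s (IA.natW n)) (IA.memW s (IA.natW (n + 1))))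
    (hT : T ∈ IA.Sig)
    (hTle : ∀ a b c : PreW A, T ≤ IA.imp (IA.eqW a b) (IA.imp (IA.eqW b c) (IA.eqW a c)))
    (hTh : Th ∈ IA.Sig) (hThle : ∀ b : PreW A, Th ≤ IA.eqW b b)
    (hSY : SY ∈ IA.Sig) (hSYle : ∀ a b : PreW A, SY ≤ IA.imp (IA.eqW a b) (IA.eqW b a)) :
    ∃ θ ∈ IA.Sig, ∀ (n : ℕ) (γ z : PreW A),
      θ ≤ IA.imp (IA.eqW (IA.natW n) γ)
        (IA.imp (IA.memW z γ) (IA.memW z (IA.natW (n + 1)))) := by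
  set R2 : Tm A := .lam (.lam (.lam (.app (.var 1) (.lam (.app (.var 0)
    (.lam (.app (.app (.var 0) (.lam (.lam (.app (.var 0) (.cst Th)))))
      (.app (.cst SY) (.var 4))))))))) with hR2
  set L2 : Tm A := .lam (.lam (.lam (.app (.var 1) (.app (.cst M) (.var 2))))) with hL2
  set PR2 : Tm A := .lam (.app (.app (.var 0) (.app (.app (.var 2) L2) R2))
    (.app (.app (.cst T) (.var 1)) (.var 4))) with hPR2
  set DS2 : Tm A := .lam (.lam (.app (.var 6) PR2)) with hDS2
  set CONT : Tm A := .lam (.app (.var 0) DS2) with hCONT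
  set DSr : Tm A := .lam (.lam (.app (.app (.app (.var 5) (.cst IA.kFc))
    (.var 1)) CONT)) with hDS
  set t : Tm A := .lam (.lam (.lam (.app (.var 1) (.lam (.app (.var 0) DSr))))) with ht
  have hok : IA.Ok 0 t := by
    simp [ht, hDS, hCONT, hDS2, hPR2, hL2, hR2, Ok, hM, hT, hTh, hSY, IA.kFc_Sig]
  refine ⟨IA.eval t [], IA.eval_closed_Sig t hok, fun n γ z => ?_⟩
  refine IA.ev_lam (IA.ev_lam ?_)
  rw [IA.memW_natW_succ n z]
  refine le_iInf fun x => IA.ev_lam ?_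
  refine IA.ev_app (iInf_le _ x) ?_
  refine le_iInf fun tt => IA.ev_lam ?_
  refine IA.ev_app (iInf_le _ x) ?_
  refine IA.ev_lam (IA.ev_lam ?_)
  -- goal: ((snd e) v) CONT ≤ x
  cases n with
  | zero =>
    refine IA.ev_app (x := (⊤ : A)) ((IA.ev_app ((IA.ev_app ?_ (IA.kFc_le
      (x := IA.subW (IA.natW 0) γ) (y := IA.subW γ (IA.natW 0)))).trans
      (IA.sub_elim (β := IA.natW 0) tt)) ?_).trans
      ((IA.memW_natW_zero (γ.fam tt)).le.trans (iInf_le _ x))) ?_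
    · exact IA.eq_elim_snd (α := IA.natW 0) (β := γ)
    · exact le_rfl
    · exact le_top
  | succ m =>
    refine IA.ev_app (x := ⨅ si : ULift.{u} (Fin (m + 1)),
        IA.imp (IA.times (IA.Dv m si.down.val)
          (IA.eqW (IA.natW si.down.val) (γ.fam tt))) x)
      ((IA.ev_app ((IA.ev_app ?_ (IA.kFc_le
        (x := IA.subW (IA.natW (m + 1)) γ) (y := IA.subW γ (IA.natW (m + 1))))).trans
        (IA.sub_elim (β := IA.natW (m + 1)) tt)) ?_).trans
        ((IA.memW_natW_succ m (γ.fam tt)).le.trans (iInf_le _ x))) ?_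
    · exact IA.eq_elim_snd (α := IA.natW (m + 1)) (β := γ)
    · exact le_rfl
    refine le_iInf fun si => IA.ev_lam ?_
    refine IA.ev_app (iInf_le _ x) ?_
    refine IA.ev_lam (IA.ev_lam ?_)
    -- goal : k PR2 ≤ x
    refine IA.ev_app (iInf_le _
      (ULift.up (⟨si.down.val, by omega⟩ : Fin (m + 2)))) ?_
    rw [times]
    refine le_iInf fun y => IA.ev_lam ?_
    refine IA.ev_app (IA.ev_app le_rfl ?_) ?_
    · -- DST2 ≤ Dv (m+1) si.down.val
      refine IA.ev_app (IA.ev_app (iInf_le _ (IA.Dv (m + 1) si.down.val)) ?_) ?_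
      · -- L branch
        refine IA.ev_lam ?_
        rw [Dv, plus]
        refine le_iInf fun y' => IA.ev_lam (IA.ev_lam ?_)
        refine IA.ev_app le_rfl (IA.ev_app ?_ le_rfl)
        exact hMle m (IA.natW si.down.val)
      · -- R branch
        refine IA.ev_lam ?_
        rw [Dv, plus]
        refine le_iInf fun y' => IA.ev_lam (IA.ev_lam ?_)
        refine IA.ev_app le_rfl ?_
        rw [IA.memW_natW_succ m (IA.natW si.down.val)]
        refine le_iInf fun x'' => IA.ev_lam ?_
        refine IA.ev_app (iInf_le _ (ULift.up (Fin.last m))) ?_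
        rw [times]
        refine le_iInf fun y'' => IA.ev_lam ?_
        refine IA.ev_app (IA.ev_app le_rfl ?_) ?_
        · rw [Dv, plus]
          refine le_iInf fun y3 => IA.ev_lam (IA.ev_lam ?_)
          refine IA.ev_app le_rfl ?_
          exact hThle (IA.natW m)
        · refine IA.ev_app ?_ le_rfl
          exact hSYle (IA.natW si.down.val) (IA.natW m)
    · -- T g d ≤ eqW (natW si) z
      refine IA.ev_app (IA.ev_app ?_ le_rfl) le_rfl
      exact hTle (IA.natW si.down.val) (γ.fam tt) z

theorem mxy_ex {Th : A} (hTh : Th ∈ IA.Sig) (hThle : ∀ b : PreW A, Th ≤ IA.eqW b b) :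
    ∃ θ ∈ IA.Sig, ∀ (n : ℕ) (γ : PreW A),
      θ ≤ IA.imp (IA.eqW (IA.natW n) γ) (IA.memW γ (IA.natW (n + 1))) := by
  set t : Tm A := .lam (.lam (.app (.var 0) (.lam (.app (.app (.var 0)
    (.lam (.lam (.app (.var 0) (.cst Th))))) (.var 2))))) with ht
  refine ⟨IA.eval t [], IA.eval_closed_Sig t (by simp [ht, Ok, hTh]), fun n γ => ?_⟩
  refine IA.ev_lam ?_
  rw [IA.memW_natW_succ n γ]
  refine le_iInf fun x => IA.ev_lam ?_
  refine IA.ev_app (iInf_le _ (ULift.up (Fin.last n))) ?_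
  rw [times]
  refine le_iInf fun y => IA.ev_lam ?_
  refine IA.ev_app (IA.ev_app le_rfl ?_) le_rfl
  rw [Dv, plus]
  refine le_iInf fun y3 => IA.ev_lam (IA.ev_lam ?_)
  refine IA.ev_app le_rfl ?_
  exact hThle (IA.natW n)

theorem az_ex {T Th SY CM CM2 : A} (hT : T ∈ IA.Sig)
    (hTle : ∀ a b c : PreW A, T ≤ IA.imp (IA.eqW a b) (IA.imp (IA.eqW b c) (IA.eqW a c)))
    (hTh : Th ∈ IA.Sig) (hThle : ∀ b : PreW A, Th ≤ IA.eqW b b)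
    (hSY : SY ∈ IA.Sig) (hSYle : ∀ a b : PreW A, SY ≤ IA.imp (IA.eqW a b) (IA.eqW b a))
    (hCM : CM ∈ IA.Sig)
    (hCMle : ∀ a b c : PreW A, CM ≤ IA.imp (IA.eqW a b) (IA.imp (IA.memW a c) (IA.memW b c)))
    (hCM2 : CM2 ∈ IA.Sig)
    (hCM2le : ∀ a c d : PreW A, CM2 ≤ IA.imp (IA.memW a c) (IA.imp (IA.eqW c d) (IA.memW a d))) :
    ∃ θ ∈ IA.Sig, ∀ (n : ℕ) (γ z : PreW A),
      θ ≤ IA.imp (IA.eqW (IA.natW n) γ) (IA.imp (IA.memW z (IA.natW (n + 1)))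
        (IA.plus (IA.memW z γ) (IA.eqW z γ))) := by
  set BL : Tm A := .lam (.lam (.lam (.app (.var 1) (.app (.app (.cst CM2)
    (.app (.app (.cst CM) (.var 3)) (.var 2))) (.var 7))))) with hBL
  set BR : Tm A := .lam (.lam (.lam (.app (.var 0) (.app (.app (.cst T)
    (.app (.app (.cst T) (.app (.cst SY) (.var 3))) (.var 2))) (.var 7))))) with hBR
  set DZ : Tm A := .lam (.lam (.app (.app (.var 1) BL) BR)) with hDZ
  set t : Tm A := .lam (.lam (.app (.var 0) (.lam (.app (.var 0) DZ)))) with ht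
  have hok : IA.Ok 0 t := by
    simp [ht, hDZ, hBL, hBR, Ok, hT, hCM, hCM2, hSY]
  refine ⟨IA.eval t [], IA.eval_closed_Sig t hok, fun n γ z => ?_⟩
  refine IA.ev_lam (IA.ev_lam ?_)
  refine IA.ev_app (x := ⨅ i : ULift.{u} (Fin (n + 1)),
    IA.imp (IA.times (IA.Dv n i.down.val) (IA.eqW (IA.natW i.down.val) z))
      (IA.plus (IA.memW z γ) (IA.eqW z γ))) ?_ ?_
  · exact (IA.memW_natW_succ n z).le.trans (iInf_le _ _)
  refine le_iInf fun i => IA.ev_lam ?_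
  refine IA.ev_app (iInf_le _ (IA.plus (IA.memW z γ) (IA.eqW z γ))) ?_
  refine IA.ev_lam (IA.ev_lam ?_)
  refine IA.ev_app (IA.ev_app (iInf_le _ (IA.plus (IA.memW z γ) (IA.eqW z γ))) ?_) ?_
  · -- BL
    refine IA.ev_lam ?_
    rw [plus]
    refine le_iInf fun y' => IA.ev_lam (IA.ev_lam ?_)
    refine IA.ev_app le_rfl ?_
    refine IA.ev_app (IA.ev_app (x := IA.memW z (IA.natW n)) ?_ ?_) le_rfl
    · exact hCM2le z (IA.natW n) γ
    · refine IA.ev_app (IA.ev_app ?_ le_rfl) le_rfl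
      exact hCMle (IA.natW i.down.val) z (IA.natW n)
  · -- BR
    refine IA.ev_lam ?_
    rw [plus]
    refine le_iInf fun y' => IA.ev_lam (IA.ev_lam ?_)
    refine IA.ev_app le_rfl ?_
    refine IA.ev_app (IA.ev_app (x := IA.eqW z (IA.natW n)) ?_ ?_) le_rfl
    · exact hTle z (IA.natW n) γ
    · refine IA.ev_app (IA.ev_app (x := IA.eqW z (IA.natW i.down.val)) ?_ ?_) le_rfl
      · exact hTle z (IA.natW i.down.val) (IA.natW n)
      · refine IA.ev_app ?_ le_rfl
        exact hSYle (IA.natW i.down.val) z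

/-! #### Realizers involving `ω` -/

theorem romega_ex {Th : A} (hTh : Th ∈ IA.Sig) (hThle : ∀ b : PreW A, Th ≤ IA.eqW b b) :
    ∃ θ ∈ IA.Sig, ∀ m : ℕ, θ ≤ IA.memW (IA.natW m) IA.omegaW := by
  set t : Tm A := .lam (.app (.var 0) (.lam (.app (.app (.var 0) (.cst IA.Kc))
    (.cst Th)))) with ht
  refine ⟨IA.eval t [], IA.eval_closed_Sig t (by simp [ht, Ok, hTh, IA.Kc_Sig]),
    fun m => ?_⟩
  rw [IA.memW_omegaW]
  refine le_iInf fun x => IA.ev_lam ?_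
  refine IA.ev_app (iInf_le _ (ULift.up m)) ?_
  rw [times]
  refine le_iInf fun y => IA.ev_lam ?_
  refine IA.ev_app (IA.ev_app le_rfl le_top) ?_
  exact hThle (IA.natW m)

theorem cempty_ex : ∃ θ ∈ IA.Sig, ∀ y : PreW A,
    θ ≤ IA.imp (IA.memW y (IA.natW 0)) ⊥ := by
  set t : Tm A := .lam (.app (.var 0) (.cst IA.Kc)) with ht
  refine ⟨IA.eval t [], IA.eval_closed_Sig t (by simp [ht, Ok, IA.Kc_Sig]), fun y => ?_⟩
  refine IA.ev_lam ?_
  refine IA.ev_app (x := (⊤ : A)) ?_ ?_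
  · exact (IA.memW_natW_zero y).le.trans (iInf_le _ ⊥)
  · exact le_top

/-- The truth value of the successor property at `γ`, with witness ranging over `W`. -/
noncomputable def BodyVal (κ : Cardinal.{u}) (γ : PreW A) : A :=
  IA.aex fun y : WSet A κ => IA.times (IA.memW y.1 IA.omegaW)
    (IA.times (⨅ z : WSet A κ, IA.imp (IA.memW z.1 γ) (IA.memW z.1 y.1))
      (IA.times (IA.memW γ y.1)
        (⨅ z : WSet A κ, IA.imp (IA.memW z.1 y.1)
          (IA.plus (IA.memW z.1 γ) (IA.eqW z.1 γ)))))

theorem body_ex {κ : Cardinal.{u}} (hκ : Cardinal.aleph0 < κ) {RW S1 MXY AZ : A}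
    (hRW : RW ∈ IA.Sig) (hRWle : ∀ m : ℕ, RW ≤ IA.memW (IA.natW m) IA.omegaW)
    (hS1 : S1 ∈ IA.Sig)
    (hS1le : ∀ (n : ℕ) (γ z : PreW A), S1 ≤ IA.imp (IA.eqW (IA.natW n) γ)
      (IA.imp (IA.memW z γ) (IA.memW z (IA.natW (n + 1)))))
    (hMXY : MXY ∈ IA.Sig)
    (hMXYle : ∀ (n : ℕ) (γ : PreW A), MXY ≤ IA.imp (IA.eqW (IA.natW n) γ)
      (IA.memW γ (IA.natW (n + 1))))
    (hAZ : AZ ∈ IA.Sig)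
    (hAZle : ∀ (n : ℕ) (γ z : PreW A), AZ ≤ IA.imp (IA.eqW (IA.natW n) γ)
      (IA.imp (IA.memW z (IA.natW (n + 1)))
        (IA.plus (IA.memW z γ) (IA.eqW z γ)))) :
    ∃ θ ∈ IA.Sig, ∀ (n : ℕ) (γ : PreW A),
      θ ≤ IA.imp (IA.eqW (IA.natW n) γ) (IA.BodyVal κ γ) := by
  set P34 : Tm A := .lam (.app (.app (.var 0) (.app (.cst MXY) (.var 4)))
    (.app (.cst AZ) (.var 4))) with hP34
  set P23 : Tm A := .lam (.app (.app (.var 0) (.app (.cst S1) (.var 3))) P34) with hP23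
  set Q4 : Tm A := .lam (.app (.app (.var 0) (.cst RW)) P23) with hQ4
  set t : Tm A := .lam (.lam (.app (.var 0) Q4)) with ht
  have hok : IA.Ok 0 t := by
    simp [ht, hQ4, hP23, hP34, Ok, hRW, hS1, hMXY, hAZ]
  refine ⟨IA.eval t [], IA.eval_closed_Sig t hok, fun n γ => ?_⟩
  refine IA.ev_lam ?_
  rw [BodyVal, aex]
  refine le_iInf fun x => IA.ev_lam ?_
  refine IA.ev_app (iInf_le _
    (⟨IA.natW (n + 1), IA.natW_hsmall hκ (n + 1)⟩ : WSet A κ)) ?_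
  rw [times]
  refine le_iInf fun y => IA.ev_lam ?_
  refine IA.ev_app (IA.ev_app le_rfl ?_) ?_
  · exact hRWle (n + 1)
  rw [times]
  refine le_iInf fun y2 => IA.ev_lam ?_
  refine IA.ev_app (IA.ev_app le_rfl ?_) ?_
  · refine le_iInf fun z => IA.ev_app ?_ le_rfl
    exact hS1le n γ z.1
  rw [times]
  refine le_iInf fun y3 => IA.ev_lam ?_
  refine IA.ev_app (IA.ev_app le_rfl ?_) ?_
  · refine IA.ev_app ?_ le_rfl
    exact hMXYle n γ
  · refine le_iInf fun z => IA.ev_app ?_ le_rfl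
    exact hAZle n γ z.1

theorem r1_ex {κ : Cardinal.{u}} (hκ : Cardinal.aleph0 < κ) {RW CE : A}
    (hRW : RW ∈ IA.Sig) (hRWle : ∀ m : ℕ, RW ≤ IA.memW (IA.natW m) IA.omegaW)
    (hCE : CE ∈ IA.Sig) (hCEle : ∀ y : PreW A, CE ≤ IA.imp (IA.memW y (IA.natW 0)) ⊥) :
    ∃ θ ∈ IA.Sig, θ ≤ IA.aex fun x : WSet A κ => IA.times (IA.memW x.1 IA.omegaW)
      (⨅ y : WSet A κ, IA.imp (IA.memW y.1 x.1) ⊥) := by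
  set t : Tm A := .lam (.app (.var 0) (.lam (.app (.app (.var 0) (.cst RW))
    (.cst CE)))) with ht
  refine ⟨IA.eval t [], IA.eval_closed_Sig t (by simp [ht, Ok, hRW, hCE]), ?_⟩
  rw [aex]
  refine le_iInf fun x => IA.ev_lam ?_
  refine IA.ev_app (iInf_le _ (⟨IA.natW 0, IA.natW_hsmall hκ 0⟩ : WSet A κ)) ?_
  rw [times]
  refine le_iInf fun y => IA.ev_lam ?_
  refine IA.ev_app (IA.ev_app le_rfl ?_) ?_
  · exact hRWle 0
  · exact le_iInf fun z => hCEle z.1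

theorem r2_ex {κ : Cardinal.{u}} {BD : A} (hBD : BD ∈ IA.Sig)
    (hBDle : ∀ (n : ℕ) (γ : PreW A),
      BD ≤ IA.imp (IA.eqW (IA.natW n) γ) (IA.BodyVal κ γ)) :
    ∃ θ ∈ IA.Sig, θ ≤ ⨅ x : WSet A κ,
      IA.imp (IA.memW x.1 IA.omegaW) (IA.BodyVal κ x.1) := by
  set t : Tm A := .lam (.app (.var 0) (.lam (.app (.var 0)
    (.lam (.lam (.app (.cst BD) (.var 0))))))) with ht
  refine ⟨IA.eval t [], IA.eval_closed_Sig t (by simp [ht, Ok, hBD]), ?_⟩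
  refine le_iInf fun xW => IA.ev_lam ?_
  refine IA.ev_app (x := ⨅ i : ULift.{u} ℕ, IA.imp (IA.times (⊤ : A)
    (IA.eqW (IA.natW i.down) xW.1)) (IA.BodyVal κ xW.1)) ?_ ?_
  · exact (IA.memW_omegaW xW.1).le.trans (iInf_le _ _)
  refine le_iInf fun i => IA.ev_lam ?_
  refine IA.ev_app (iInf_le _ (IA.BodyVal κ xW.1)) ?_
  refine IA.ev_lam (IA.ev_lam ?_)
  refine IA.ev_app ?_ le_rfl
  exact hBDle i.down xW.1

end ImplicativeAlgebra

theorem stmt16 {A : Type u} [CompleteLattice A] (IA : ImplicativeAlgebra A)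
    (κ : Cardinal.{u}) (hκ : κ.IsInaccessible) (hA : Cardinal.mk A < κ) :
    IA.interp κ
      (SetFormula.ex
        ((SetFormula.ex ((SetFormula.mem 1 0).and
            (SetFormula.all ((SetFormula.mem 2 1).imp SetFormula.bot)))).and
         (SetFormula.all ((SetFormula.mem 1 0).imp
            (SetFormula.ex ((SetFormula.mem 2 0).and
              ((SetFormula.all ((SetFormula.mem 3 1).imp (SetFormula.mem 3 2))).and
               ((SetFormula.mem 1 2).and
                (SetFormula.all ((SetFormula.mem 3 2).imp
                  ((SetFormula.mem 3 1).or (SetFormula.eq 3 1))))))))))))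
      (fun i => i.elim0) ∈ IA.Sig := by
  classical
  have hℵ : Cardinal.aleph0 < κ := hκ.1
  obtain ⟨Th, hTh, hThle⟩ := IA.refl_ex
  obtain ⟨T, hT, hTle⟩ := IA.trans_ex
  obtain ⟨SY, hSY, hSYle⟩ := IA.sym_ex
  obtain ⟨CM, hCM, hCMle⟩ := IA.cm_ex hT hTle
  obtain ⟨CM2, hCM2, hCM2le⟩ := IA.cm2_ex hT hTle
  obtain ⟨M, hM, hMle⟩ := IA.mono_ex hTh hThle hSY hSYle
  obtain ⟨S1, hS1, hS1le⟩ := IA.s1_ex hM hMle hT hTle hTh hThle hSY hSYle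
  obtain ⟨MXY, hMXY, hMXYle⟩ := IA.mxy_ex hTh hThle
  obtain ⟨AZ, hAZ, hAZle⟩ := IA.az_ex hT hTle hTh hThle hSY hSYle hCM hCMle hCM2 hCM2le
  obtain ⟨RW, hRW, hRWle⟩ := IA.romega_ex hTh hThle
  obtain ⟨CE, hCE, hCEle⟩ := IA.cempty_ex
  obtain ⟨BD, hBD, hBDle⟩ := IA.body_ex (κ := κ) hℵ hRW hRWle hS1 hS1le hMXY hMXYle hAZ hAZle
  obtain ⟨R1, hR1, hR1le⟩ := IA.r1_ex (κ := κ) hℵ hRW hRWle hCE hCEle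
  obtain ⟨R2, hR2, hR2le⟩ := IA.r2_ex (κ := κ) hBD hBDle
  set t : Tm A := .lam (.app (.var 0) (.lam (.app (.app (.var 0) (.cst R1))
    (.cst R2)))) with ht
  refine IA.Sig_upward (IA.eval_closed_Sig t (by simp [ht, ImplicativeAlgebra.Ok, hR1, hR2])) ?_
  have hi : IA.interp κ
      (SetFormula.ex
        ((SetFormula.ex ((SetFormula.mem 1 0).and
            (SetFormula.all ((SetFormula.mem 2 1).imp SetFormula.bot)))).and
         (SetFormula.all ((SetFormula.mem 1 0).imp
            (SetFormula.ex ((SetFormula.mem 2 0).and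
              ((SetFormula.all ((SetFormula.mem 3 1).imp (SetFormula.mem 3 2))).and
               ((SetFormula.mem 1 2).and
                (SetFormula.all ((SetFormula.mem 3 2).imp
                  ((SetFormula.mem 3 1).or (SetFormula.eq 3 1))))))))))))
      (fun i => i.elim0)
    = IA.aex (fun u : WSet A κ =>
        IA.times
          (IA.aex fun x : WSet A κ => IA.times (IA.memW x.1 u.1)
            (⨅ y : WSet A κ, IA.imp (IA.memW y.1 x.1) ⊥))
          (⨅ x : WSet A κ, IA.imp (IA.memW x.1 u.1)
            (IA.aex fun y : WSet A κ => IA.times (IA.memW y.1 u.1)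
              (IA.times (⨅ z : WSet A κ, IA.imp (IA.memW z.1 x.1) (IA.memW z.1 y.1))
                (IA.times (IA.memW x.1 y.1)
                  (⨅ z : WSet A κ, IA.imp (IA.memW z.1 y.1)
                    (IA.plus (IA.memW z.1 x.1) (IA.eqW z.1 x.1)))))))) := rfl
  rw [hi, ImplicativeAlgebra.aex]
  refine le_iInf fun x => IA.ev_lam ?_
  refine IA.ev_app (iInf_le _ ((⟨IA.omegaW, IA.omegaW_hsmall hℵ⟩ : WSet A κ))) ?_
  rw [ImplicativeAlgebra.times]
  refine le_iInf fun y => IA.ev_lam ?_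
  refine IA.ev_app (IA.ev_app le_rfl ?_) ?_
  · exact hR1le
  · exact hR2le
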